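/- arXiv:1707.03798 — 2 statements merged into one kernel-verified Lean document; each statement's English description precedes it below -/
import Mathlib

section
/- Let ω ∈ ℂ with |ω| = 1 and let (λ_k) be a sequence in the open unit disk 𝔻 with λ_k → ω. Then the following are equivalent: (i) Im(ω̄ λ_k) = o(√(1 - |λ_k|²)) (subhorocyclic convergence); (ii) for every r ∈ (0,1), λ_k eventually lies in the horodisk H_r(ω) = {z ∈ ℂ : |z - (1-r)ω| < r}. -/
open Filter Complex

/-- For `|ω| = 1` and a sequence `λ_k` in the open unit disk converging to `ω`,
subhorocyclic convergence `Im(ω̄ λ_k) = o(√(1 - |λ_k|²))` is equivalent to the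
sequence eventually entering every horodisk `{z : |z - (1-r)ω| < r}`, `0 < r < 1`. -/
theorem stmt8 (ω : ℂ) (hω : ‖ω‖ = 1) (l : ℕ → ℂ)
    (hl : ∀ k, ‖l k‖ < 1) (hconv : Tendsto l atTop (nhds ω)) :
    Tendsto (fun k => ((starRingEnd ℂ) ω * l k).im / Real.sqrt (1 - ‖l k‖ ^ 2))
        atTop (nhds 0)
      ↔ ∀ r : ℝ, 0 < r → r < 1 →
          ∀ᶠ k in atTop, ‖l k - (1 - r) * ω‖ < r := by
  set c := (starRingEnd ℂ) ω with hc_def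
  have hc : ‖c‖ = 1 := by simpa [hc_def] using hω
  have hcw : c * ω = 1 := by
    rw [hc_def, mul_comm, Complex.mul_conj]
    norm_cast
    rw [← Complex.sq_norm, hω]; norm_num
  have habs : ∀ k, ‖c * l k‖ = ‖l k‖ := fun k => by
    rw [norm_mul, hc, one_mul]
  have hs : ∀ k, 1 - ‖l k‖ ^ 2
      = 1 - ((c * l k).re ^ 2 + (c * l k).im ^ 2) := fun k => by
    rw [← habs k, Complex.sq_norm, Complex.normSq_apply]; ring
  have hspos : ∀ k, 0 < 1 - ‖l k‖ ^ 2 := fun k => by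
    have h1 := hl k; have h2 := norm_nonneg (l k); nlinarith
  have hx1 : ∀ k, (c * l k).re < 1 := fun k =>
    lt_of_le_of_lt (le_trans (Complex.re_le_norm _) (le_of_eq (habs k))) (hl k)
  have hxm1 : ∀ k, -1 < (c * l k).re := fun k => by
    have h1 := Complex.abs_re_le_norm (c * l k)
    have h2 := habs k
    have h3 := hl k
    have h4 := neg_abs_le (c * l k).re
    linarith
  have hwconv : Tendsto (fun k => c * l k) atTop (nhds 1) := by
    have h := hconv.const_mul c
    rwa [hcw] at h
  have hxlim : Tendsto (fun k => (c * l k).re) atTop (nhds 1) := by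
    have h := (Complex.continuous_re.tendsto 1).comp hwconv
    simpa [Function.comp_def] using h
  have hhor : ∀ (r : ℝ), 0 < r → ∀ k,
      (‖l k - (1 - r) * ω‖ < r ↔
        (1 - (c * l k).re) ^ 2 + (c * l k).im ^ 2 < 2 * r * (1 - (c * l k).re)) := by
    intro r hr k
    have e : c * (l k - (1 - (r : ℂ)) * ω) = c * l k - (1 - r) := by
      linear_combination ((r : ℂ) - 1) * hcw
    have h1 : ‖l k - (1 - (r : ℂ)) * ω‖ = ‖c * l k - (1 - r)‖ := by
      rw [← e, norm_mul, hc, one_mul]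
    have hre : (c * l k - (1 - (r : ℂ))).re = (c * l k).re - (1 - r) := by simp
    have him : (c * l k - (1 - (r : ℂ))).im = (c * l k).im := by simp
    have hn : ‖c * l k - (1 - (r : ℂ))‖ ^ 2
        = ((c * l k).re - (1 - r)) ^ 2 + (c * l k).im ^ 2 := by
      rw [Complex.sq_norm, Complex.normSq_apply, hre, him]; ring
    rw [h1]
    have hA := norm_nonneg (c * l k - (1 - (r : ℂ)))
    constructor
    · intro hlt
      have h2 : ‖c * l k - (1 - (r : ℂ))‖ ^ 2 < r ^ 2 := by nlinarith
      rw [hn] at h2; nlinarith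
    · intro hlt
      have h2 : ‖c * l k - (1 - (r : ℂ))‖ ^ 2 < r ^ 2 := by rw [hn]; nlinarith
      nlinarith
  constructor
  · intro h r hr hr1
    have hsq : Tendsto (fun k => (c * l k).im ^ 2 / (1 - ‖l k‖ ^ 2))
        atTop (nhds 0) := by
      have h2 := h.mul h
      rw [mul_zero] at h2
      refine h2.congr fun k => ?_
      rw [div_mul_div_comm, Real.mul_self_sqrt (hspos k).le, ← pow_two]
    have hev1 : ∀ᶠ k in atTop,
        (c * l k).im ^ 2 / (1 - ‖l k‖ ^ 2) < r / 2 :=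
      hsq.eventually_lt_const (by linarith)
    have hev2 : ∀ᶠ k in atTop, 1 - r < (c * l k).re :=
      hxlim.eventually_const_lt (by linarith)
    filter_upwards [hev1, hev2] with k h1 h2
    rw [hhor r hr k]
    have h3 : (c * l k).im ^ 2 < r / 2 * (1 - ‖l k‖ ^ 2) :=
      (div_lt_iff₀ (hspos k)).1 h1
    have h4 := hs k
    have h5 := hx1 k
    have h6 := hxm1 k
    nlinarith [sq_nonneg ((c * l k).im),
      mul_pos (sub_pos.2 h5) (show (0:ℝ) < (c * l k).re - (1 - r) by linarith),
      mul_nonneg hr.le (sq_nonneg ((c * l k).im)),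
      mul_nonneg hr.le (sq_nonneg (1 - (c * l k).re))]
  · intro h
    rw [NormedAddCommGroup.tendsto_nhds_zero]
    intro ε hε
    set r : ℝ := min (ε ^ 2 / 4) (1 / 4) with hr_def
    have hr0 : 0 < r := lt_min (by positivity) (by norm_num)
    have hr1 : r < 1 := lt_of_le_of_lt (min_le_right _ _) (by norm_num)
    have h4 : r ≤ ε ^ 2 / 4 := min_le_left _ _
    have h5 : r ≤ 1 / 4 := min_le_right _ _
    filter_upwards [h r hr0 hr1, hxlim.eventually_const_lt (show (1:ℝ)/2 < 1 by norm_num)]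
      with k hk hk2
    rw [hhor r hr0 k] at hk
    have hsk := hspos k
    have hsk2 := hs k
    have hx1k := hx1 k
    have hy2 : (c * l k).im ^ 2 < ε ^ 2 * (1 - ‖l k‖ ^ 2) := by
      nlinarith [sq_nonneg ((c * l k).im), sq_nonneg (1 - (c * l k).re),
        mul_pos (sub_pos.2 hx1k) hr0, mul_pos hε hε,
        mul_nonneg (mul_pos hε hε).le (sub_pos.2 hx1k).le]
    have hsqrt : 0 < Real.sqrt (1 - ‖l k‖ ^ 2) := Real.sqrt_pos.2 hsk
    rw [Real.norm_eq_abs, abs_div, abs_of_pos hsqrt, div_lt_iff₀ hsqrt]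
    have habsim : |(c * l k).im| = Real.sqrt ((c * l k).im ^ 2) :=
      (Real.sqrt_sq_eq_abs _).symm
    rw [habsim]
    calc Real.sqrt ((c * l k).im ^ 2)
        < Real.sqrt (ε ^ 2 * (1 - ‖l k‖ ^ 2)) :=
          Real.sqrt_lt_sqrt (sq_nonneg _) hy2
      _ = ε * Real.sqrt (1 - ‖l k‖ ^ 2) := by
          rw [Real.sqrt_mul (sq_nonneg ε), Real.sqrt_sq hε.le]
end

section
/- Koenigs linearization: let λ ∈ ℂ with 0 < |λ| < 1 and let P_λ(z) = λz + z². Then there exists an open neighborhood U of 0 and a holomorphic function φ: U → ℂ with φ(0) = 0, φ'(0) = 1, and φ(P_λ(z)) = λ φ(z) for all z ∈ U with P_λ(z) ∈ U. Moreover φ can be obtained as the locally uniform limit φ(z) = lim_{n→∞} P_λⁿ(z)/λⁿ on a sufficiently small neighborhood of 0. -/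
open Filter

/-- Koenigs linearization for `P_λ(z) = λz + z²`, `0 < |λ| < 1`: there is a
neighborhood `U` of `0` and a holomorphic `φ` with `φ(0) = 0`, `φ'(0) = 1`,
`φ ∘ P_λ = λ φ` on `U`, obtained as the locally uniform limit of `P_λⁿ(z)/λⁿ`
on a sufficiently small neighborhood of `0`. -/
theorem stmt13 (lam : ℂ) (h0 : lam ≠ 0) (h1 : ‖lam‖ < 1)
    (P : ℂ → ℂ) (hP : P = fun z => lam * z + z ^ 2) :
    ∃ U ∈ nhds (0 : ℂ), ∃ φ : ℂ → ℂ,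
      DifferentiableOn ℂ φ U ∧ φ 0 = 0 ∧ HasDerivAt φ 1 0 ∧
      (∀ z ∈ U, P z ∈ U → φ (P z) = lam * φ z) ∧
      ∃ V ∈ nhds (0 : ℂ), V ⊆ U ∧
        TendstoLocallyUniformlyOn (fun n z => P^[n] z / lam ^ n) φ atTop V := by
  set a : ℝ := ‖lam‖ with ha
  have ha0 : 0 < a := norm_pos_iff.mpr h0
  have hasq : a < Real.sqrt a := by
    rw [Real.lt_sqrt ha0.le]
    nlinarith
  set r : ℝ := (Real.sqrt a - a) / 2 with hr
  have hr0 : 0 < r := by simp only [hr]; linarith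
  set c : ℝ := a + r with hc
  have hc0 : 0 < c := by positivity
  have hcs : c < Real.sqrt a := by simp only [hc, hr]; linarith
  have hs1 : Real.sqrt a < 1 := by
    nlinarith [Real.sq_sqrt ha0.le, Real.sqrt_nonneg a]
  have hc1 : c < 1 := hcs.trans hs1
  have hc2 : c ^ 2 < a := by
    have := Real.sq_sqrt ha0.le
    nlinarith [Real.sqrt_nonneg a]
  set U : Set ℂ := Metric.ball (0 : ℂ) r with hU
  have hUopen : IsOpen U := Metric.isOpen_ball
  have hUnhds : U ∈ nhds (0 : ℂ) := Metric.ball_mem_nhds 0 hr0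
  -- zero is fixed
  have hPapp : ∀ w : ℂ, P w = lam * w + w ^ 2 := fun w => by rw [hP]
  have hPstep : ∀ w : ℂ, ‖w‖ ≤ r → ‖P w‖ ≤ c * ‖w‖ := by
    intro w hw
    rw [hPapp w]
    calc ‖lam * w + w ^ 2‖
        ≤ ‖lam * w‖ + ‖w ^ 2‖ := norm_add_le _ _
      _ = a * ‖w‖ + ‖w‖ ^ 2 := by rw [norm_mul, norm_pow, ← ha]
      _ ≤ a * ‖w‖ + r * ‖w‖ := by nlinarith [norm_nonneg w]
      _ = c * ‖w‖ := by rw [hc]; ring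
  have hP0 : P 0 = 0 := by rw [hPapp]; ring
  have hitz : ∀ n, P^[n] (0 : ℂ) = 0 := by
    intro n; induction n with
    | zero => simp
    | succ n ih => rw [Function.iterate_succ_apply', ih, hP0]
  -- key iterate bound
  have hiter : ∀ z : ℂ, ‖z‖ ≤ r → ∀ n, ‖P^[n] z‖ ≤ c ^ n * r := by
    intro z hz n
    induction n with
    | zero => simpa using hz
    | succ n ih =>
      rw [Function.iterate_succ_apply']
      have hle : ‖P^[n] z‖ ≤ r := by
        calc ‖P^[n] z‖ ≤ c ^ n * r := ih
        _ ≤ 1 * r := by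
          have : c ^ n ≤ 1 := pow_le_one₀ hc0.le hc1.le
          nlinarith
        _ = r := one_mul r
      calc ‖P (P^[n] z)‖ ≤ c * ‖P^[n] z‖ := hPstep _ hle
        _ ≤ c * (c ^ n * r) := by nlinarith
        _ = c ^ (n + 1) * r := by ring
  -- the series
  set g : ℕ → ℂ → ℂ := fun n z => (P^[n] z) ^ 2 / lam ^ (n + 1) with hg
  set φ : ℂ → ℂ := fun z => z + ∑' n, g n z with hφ
  set u : ℕ → ℝ := fun n => r ^ 2 / a * (c ^ 2 / a) ^ n with hu
  have hsum : Summable u :=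
    (summable_geometric_of_lt_one (by positivity)
      (by rw [div_lt_one ha0]; exact hc2)).mul_left _
  have hbound : ∀ n (z : ℂ), z ∈ U → ‖g n z‖ ≤ u n := by
    intro n z hz
    have hz' : ‖z‖ ≤ r := le_of_lt (by simpa [hU] using hz)
    have h1' := hiter z hz' n
    simp only [hg, hu]
    rw [norm_div, norm_pow, norm_pow]
    have hlam : ‖lam‖ = a := rfl
    rw [hlam]
    rw [div_le_iff₀ (by positivity)]
    have h1'' : ‖P^[n] z‖ ≤ c ^ n * r := h1'
    have this' : ‖P^[n] z‖ ^ 2 ≤ (c ^ n * r) ^ 2 := by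
      have hnn : (0:ℝ) ≤ ‖P^[n] z‖ := norm_nonneg _
      nlinarith
    have key : ∀ A C R : ℝ, A ≠ 0 → (C ^ n * R) ^ 2 = R ^ 2 / A * (C ^ 2 / A) ^ n * A ^ (n + 1) := by
      intro A C R hA
      rw [div_pow, pow_succ]
      field_simp
      ring
    calc ‖P^[n] z‖ ^ 2 ≤ (c ^ n * r) ^ 2 := this'
      _ = r ^ 2 / a * (c ^ 2 / a) ^ n * a ^ (n + 1) := key a c r ha0.ne'
  have htsum : TendstoUniformlyOn (fun N z => ∑ n ∈ Finset.range N, g n z)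
      (fun z => ∑' n, g n z) atTop U := tendstoUniformlyOn_tsum_nat hsum hbound
  -- partial sums identity
  have hps : ∀ (N : ℕ) (z : ℂ), P^[N] z / lam ^ N = z + ∑ n ∈ Finset.range N, g n z := by
    intro N z
    induction N with
    | zero => simp
    | succ N ih =>
      rw [Finset.sum_range_succ, Function.iterate_succ_apply']
      rw [hPapp (P^[N] z), ← add_assoc, ← ih]
      simp only [hg]
      have key : ∀ w v L : ℂ, L ≠ 0 → (L * w + v ^ 2) / L ^ (N + 1) = w / L ^ N + v ^ 2 / L ^ (N + 1) := by
        intro w v L hL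
        field_simp
        ring
      exact key _ _ _ h0
  -- uniform convergence of the iterates
  have hunif : TendstoUniformlyOn (fun N z => P^[N] z / lam ^ N) φ atTop U := by
    have : (fun N z => P^[N] z / lam ^ N)
        = fun N z => z + ∑ n ∈ Finset.range N, g n z := by
      funext N z; exact hps N z
    rw [this, hφ]
    have hid : TendstoUniformlyOn (fun (_ : ℕ) (z : ℂ) => z) (fun z => z) atTop U := by
      intro v hv
      filter_upwards with N z _
      exact refl_mem_uniformity hv
    exact hid.add htsum
  -- differentiability of the iterates
  have hdiffP : Differentiable ℂ P := by
    rw [hP]; fun_prop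
  have hdiffIt : ∀ N, Differentiable ℂ (fun z => P^[N] z) := by
    intro N
    induction N with
    | zero => simpa using differentiable_id
    | succ N ih =>
      have : (fun z => P^[N + 1] z) = fun z => P (P^[N] z) := by
        funext z; rw [Function.iterate_succ_apply']
      rw [this]
      exact hdiffP.comp ih
  have hdiffF : ∀ N, DifferentiableOn ℂ (fun z => P^[N] z / lam ^ N) U := by
    intro N
    exact ((hdiffIt N).div_const _).differentiableOn
  have hlocal : TendstoLocallyUniformlyOn (fun N z => P^[N] z / lam ^ N) φ atTop U :=
    hunif.tendstoLocallyUniformlyOn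
  have hφdiff : DifferentiableOn ℂ φ U :=
    hlocal.differentiableOn (Eventually.of_forall hdiffF) hUopen
  -- pointwise convergence
  have hpt : ∀ z ∈ U, Tendsto (fun N => P^[N] z / lam ^ N) atTop (nhds (φ z)) :=
    fun z hz => hlocal.tendsto_at hz
  -- φ 0 = 0
  have hφ0 : φ 0 = 0 := by
    have h' := hpt 0 (Metric.mem_ball_self hr0)
    have : (fun N => P^[N] (0:ℂ) / lam ^ N) = fun _ => (0:ℂ) := by
      funext N; rw [hitz N]; simp
    rw [this] at h'
    exact (tendsto_nhds_unique tendsto_const_nhds h').symm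
  -- derivatives of iterates at 0
  have hDP : ∀ w : ℂ, HasDerivAt P (lam + 2 * w) w := by
    intro w
    rw [hP]
    have h1' : HasDerivAt (fun z : ℂ => lam * z) lam w := by
      simpa using (hasDerivAt_id w).const_mul lam
    have h2' : HasDerivAt (fun z : ℂ => z ^ 2) (2 * w) w := by
      simpa using hasDerivAt_pow 2 w
    exact h1'.add h2'
  have hDit : ∀ N, HasDerivAt (fun z => P^[N] z) (lam ^ N) 0 := by
    intro N
    induction N with
    | zero => simp only [Function.iterate_zero, id_eq, pow_zero]; exact hasDerivAt_id' 0
    | succ N ih =>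
      have heq : (fun z => P^[N + 1] z) = P ∘ (fun z => P^[N] z) := by
        funext z; rw [Function.iterate_succ_apply']; rfl
      rw [heq]
      have hp : HasDerivAt P lam (P^[N] 0) := by
        rw [hitz N]; simpa using hDP 0
      have := HasDerivAt.comp (0:ℂ) hp ih
      rw [pow_succ']
      exact this
  have hderivF : ∀ N, deriv (fun z => P^[N] z / lam ^ N) 0 = 1 := by
    intro N
    have h' : HasDerivAt (fun z => P^[N] z / lam ^ N) (lam ^ N / lam ^ N) 0 :=
      (hDit N).div_const _
    rw [h'.deriv, div_self (pow_ne_zero N h0)]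
  -- deriv φ 0 = 1
  have hderivφ : deriv φ 0 = 1 := by
    have hd := hlocal.deriv (Eventually.of_forall hdiffF) hUopen
    have h' := hd.tendsto_at (Metric.mem_ball_self hr0)
    have : (fun N => (deriv ∘ fun N z => P^[N] z / lam ^ N) N 0) = fun _ => (1:ℂ) := by
      funext N; exact hderivF N
    rw [show (deriv ∘ fun N z => P^[N] z / lam ^ N) = fun N => deriv (fun z => P^[N] z / lam ^ N) from rfl] at h'
    have h'' : Tendsto (fun _ : ℕ => (1:ℂ)) atTop (nhds (deriv φ 0)) := by
      refine h'.congr fun N => (hderivF N).symm ▸ rfl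
    exact (tendsto_nhds_unique tendsto_const_nhds h'').symm
  have hHD : HasDerivAt φ 1 0 := by
    have := (hφdiff.differentiableAt (hUopen.mem_nhds (Metric.mem_ball_self hr0))).hasDerivAt
    rwa [hderivφ] at this
  -- functional equation
  have hfe : ∀ z ∈ U, P z ∈ U → φ (P z) = lam * φ z := by
    intro z hz hPz
    have h1' := hpt (P z) hPz
    have h2' : Tendsto (fun N => P^[N] (P z) / lam ^ N) atTop (nhds (lam * φ z)) := by
      have heq : (fun N => P^[N] (P z) / lam ^ N)
          = fun N => lam * (P^[N + 1] z / lam ^ (N + 1)) := by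
        funext N
        rw [← Function.iterate_succ_apply]
        rw [pow_succ]
        field_simp
      rw [heq]
      have : Tendsto (fun N => P^[N + 1] z / lam ^ (N + 1)) atTop (nhds (φ z)) :=
        (hpt z hz).comp (tendsto_add_atTop_nat 1)
      exact this.const_mul lam
    exact tendsto_nhds_unique h1' h2'
  exact ⟨U, hUnhds, φ, hφdiff, hφ0, hHD, hfe, U, hUnhds, subset_rfl, hlocal⟩
end
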